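/- In the free pseudosolution setup, assume f̃(N(B)) ⊆ N(B+f(B)), set N' = N(A+f(B)) + f̃(N(A)) ⊆ ⋀²(A+f(A)), and write N'(X) = N' ∩ ⋀²X for subspaces X of A+f(A). Then for every subspace A' with B ⊆ A' ⊆ A: (1) N'(A+f(A')) = N(A+f(B)) + f̃(N(A')); (2) for any family (e₁,…,e_t) in ⋀²A' which is a basis of N(A') modulo N(B), the family (f̃(e₁),…,f̃(e_t)) is a basis of N'(A+f(A')) modulo N(A+f(B)); (3) dim(N'(A+f(A'))/N(A+f(B))) = dim(N(A')/N(B)) and δ(A+f(A')/A+f(B)) = δ(A'/B), where the left-hand relative predimension is computed using N'. -/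

import Mathlib

/-!
Common notions: for a subspace `A` of an ambient `K`-vector space `M`, `wedge2 K A` is the
image of the exterior square `⋀² A` inside the exterior algebra of `M` (the span of the
products `a ∧ b` for `a, b ∈ A`).  For subspaces `C`, `B`, `fdim K C B` (resp. `cdim K C B`)
is the dimension of `B` over `C`, i.e. of the quotient `B / (C ∩ B)`, as a natural number
(resp. as a cardinal), and `FinOver K C B` says that `B` is finite-dimensional over `C`.
Relative to a fixed subspace `N` of `⋀² M`, writing `N(X) := N ⊓ wedge2 K X`,
`pdim K N C B` is the relative predimension `δ(B/C) = dim(B/C) - dim(N(B)/N(C))` and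
`pdim0 K N A = δ(A) = dim A - dim N(A)`.  `Strong K N B A` says that `B` is strong
(self-sufficient) in `A`:  `δ(C/B) ≥ 0` (stated in the equivalent subtraction-free form
`dim(N(C)/N(B)) ≤ dim(C/B)`) for every intermediate subspace `C` finite-dimensional over
`B`; `MinStrong K N B A` says that `A` is a minimal strong extension of `B`.
-/

noncomputable section

universe u v

variable (K : Type u) [Field K] {M : Type v} [AddCommGroup M] [Module K M]

/-- The image of the exterior square `⋀² A` of a subspace `A` inside the exterior algebra
of the ambient space. -/
def wedge2 (A : Submodule K M) : Submodule K (ExteriorAlgebra K M) :=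
  Submodule.span K
    {z | ∃ a ∈ A, ∃ b ∈ A, z = ExteriorAlgebra.ι K a * ExteriorAlgebra.ι K b}

/-- The relative dimension `dim (B / C)`, as a natural number. -/
def fdim (C B : Submodule K M) : ℕ :=
  Module.finrank K (↥B ⧸ Submodule.comap B.subtype C)

/-- The relative dimension `dim (B / C)`, as a cardinal. -/
def cdim (C B : Submodule K M) : Cardinal :=
  Module.rank K (↥B ⧸ Submodule.comap B.subtype C)

/-- `B` is finite-dimensional over `C`. -/
def FinOver (C B : Submodule K M) : Prop :=
  Module.Finite K (↥B ⧸ Submodule.comap B.subtype C)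

/-- The relative predimension `δ(B/C) = dim(B/C) - dim(N(B)/N(C))` with respect to `N`. -/
def pdim (N : Submodule K (ExteriorAlgebra K M)) (C B : Submodule K M) : ℤ :=
  (fdim K C B : ℤ) - (fdim K (N ⊓ wedge2 K C) (N ⊓ wedge2 K B) : ℤ)

/-- The predimension `δ(A) = dim A - dim N(A)` with respect to `N`. -/
def pdim0 (N : Submodule K (ExteriorAlgebra K M)) (A : Submodule K M) : ℤ :=
  (Module.finrank K ↥A : ℤ) - (Module.finrank K ↥(N ⊓ wedge2 K A) : ℤ)

/-- `B` is strong (self-sufficient) in `A` with respect to `N`. -/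
def Strong (N : Submodule K (ExteriorAlgebra K M)) (B A : Submodule K M) : Prop :=
  B ≤ A ∧ ∀ C : Submodule K M, B ≤ C → C ≤ A → FinOver K B C →
    cdim K (N ⊓ wedge2 K B) (N ⊓ wedge2 K C) ≤ Cardinal.lift.{u} (cdim K B C)

/-- `A` is a minimal strong extension of `B` with respect to `N`. -/
def MinStrong (N : Submodule K (ExteriorAlgebra K M)) (B A : Submodule K M) : Prop :=
  Strong K N B A ∧ B < A ∧ ∀ C : Submodule K M, B < C → C < A → ¬ Strong K N C A


section Aux

open Submodule ExteriorAlgebra Module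

variable {K : Type u} [Field K] {W : Type v} [AddCommGroup W] [Module K W]

/-- Left contraction by a dual vector, on the exterior algebra. -/
noncomputable def ctr (φ : W →ₗ[K] K) : ExteriorAlgebra K W →ₗ[K] ExteriorAlgebra K W :=
  CliffordAlgebra.contractLeft (Q := (0 : QuadraticForm K W)) φ

lemma ctr_ι_mul_ι (φ : W →ₗ[K] K) (a b : W) :
    ctr φ (ι K a * ι K b) = φ a • ι K b - φ b • ι K a := by
  rw [ctr, CliffordAlgebra.contractLeft_ι_mul, CliffordAlgebra.contractLeft_ι]
  rw [← Algebra.commutes, ← Algebra.smul_def]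

lemma mul_mem_wedge2 {X : Submodule K W} {a b : W} (ha : a ∈ X) (hb : b ∈ X) :
    ι K a * ι K b ∈ wedge2 K X :=
  Submodule.subset_span ⟨a, ha, b, hb, rfl⟩

lemma wedge2_mono {X Y : Submodule K W} (h : X ≤ Y) : wedge2 K X ≤ wedge2 K Y := by
  apply Submodule.span_mono
  rintro z ⟨a, ha, b, hb, rfl⟩
  exact ⟨a, h ha, b, h hb, rfl⟩

lemma wedge2_le {X : Submodule K W} {P : Submodule K (ExteriorAlgebra K W)}
    (h : ∀ a ∈ X, ∀ b ∈ X, ι K a * ι K b ∈ P) : wedge2 K X ≤ P := by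
  apply Submodule.span_le.2
  rintro z ⟨a, ha, b, hb, rfl⟩
  exact h a ha b hb

lemma ctr_eq_zero_of_wedge2 {X : Submodule K W} (φ : W →ₗ[K] K)
    (hφ : ∀ v ∈ X, φ v = 0) {m : ExteriorAlgebra K W} (hm : m ∈ wedge2 K X) :
    ctr φ m = 0 := by
  have : wedge2 K X ≤ LinearMap.ker (ctr φ) := by
    apply wedge2_le
    intro a ha b hb
    simp [LinearMap.mem_ker, ctr_ι_mul_ι, hφ a ha, hφ b hb]
  exact this hm

end Aux
section Aux2

open Submodule ExteriorAlgebra Module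

variable {K : Type u} [Field K] {W : Type v} [AddCommGroup W] [Module K W]

/-- Extend a functional from a submodule to the whole space (over a field). -/
lemma exists_extend_dual {V' : Type*} [AddCommGroup V'] [Module K V']
    (p : Submodule K V') (g : ↥p →ₗ[K] K) :
    ∃ h : V' →ₗ[K] K, ∀ x : ↥p, h x = g x := by
  obtain ⟨q, hq⟩ := p.exists_isCompl
  refine ⟨g ∘ₗ (p.projectionOnto q hq), fun x => ?_⟩
  simp [Submodule.projectionOnto_apply_left hq x]

/-- A functional vanishing on `X` and equal to `1` at `x ∉ X`. -/
lemma exists_dual_annihilator {X : Submodule K W} {x : W} (hx : x ∉ X) :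
    ∃ φ : W →ₗ[K] K, (∀ v ∈ X, φ v = 0) ∧ φ x = 1 := by
  set xq : W ⧸ X := X.mkQ x with hxq
  have hne : xq ≠ 0 := by
    simpa [hxq, Submodule.mkQ_apply, Submodule.Quotient.mk_eq_zero] using hx
  obtain ⟨h, hh⟩ := exists_extend_dual (K := K) (Submodule.span K {xq})
    (LinearEquiv.coord K _ xq hne).toLinearMap
  refine ⟨h ∘ₗ X.mkQ, fun v hv => ?_, ?_⟩
  · simp [Submodule.mkQ_apply, (Submodule.Quotient.mk_eq_zero X).2 hv]
  · have : h xq = 1 := by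
      have := hh ⟨xq, Submodule.mem_span_singleton_self xq⟩
      rw [this]
      exact LinearEquiv.coord_self K _ xq hne
    exact this

end Aux2
section Aux3

open Submodule ExteriorAlgebra Module

variable {K : Type u} [Field K] {W : Type v} [AddCommGroup W] [Module K W]

lemma wedge2_eq_mul (X : Submodule K W) :
    wedge2 K X = (X.map (ι K)) * (X.map (ι K)) := by
  apply le_antisymm
  · apply wedge2_le
    intro a ha b hb
    exact Submodule.mul_mem_mul ⟨a, ha, rfl⟩ ⟨b, hb, rfl⟩
  · apply Submodule.mul_le.2
    rintro _ ⟨a, ha, rfl⟩ _ ⟨b, hb, rfl⟩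
    exact mul_mem_wedge2 ha hb

lemma wedge2_finiteDimensional (X : Submodule K W) [FiniteDimensional K ↥X] :
    FiniteDimensional K ↥(wedge2 K X) := by
  rw [wedge2_eq_mul]
  have hfg : (X.map (ι K)).FG := by
    have : FiniteDimensional K ↥(X.map (ι K)) := by infer_instance
    exact (Submodule.fg_iff_finiteDimensional _).2 this
  exact (Submodule.fg_iff_finiteDimensional _).1 (hfg.mul hfg)

/-- Decomposition of the exterior square of `X ⊔ span {x}`. -/
lemma wedge2_sup_span_le (X : Submodule K W) (x : W) :
    wedge2 K (X ⊔ Submodule.span K {x}) ≤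
      wedge2 K X ⊔ X.map ((LinearMap.mulRight K (ι K x)).comp (ι K)) := by
  apply wedge2_le
  intro a ha b hb
  rw [Submodule.mem_sup] at ha hb
  obtain ⟨a', ha', as, has, rfl⟩ := ha
  obtain ⟨b', hb', bs, hbs, rfl⟩ := hb
  rw [Submodule.mem_span_singleton] at has hbs
  obtain ⟨s, rfl⟩ := has
  obtain ⟨t, rfl⟩ := hbs
  have expand : ι K (a' + s • x) * ι K (b' + t • x) =
      ι K a' * ι K b' + ι K (t • a' - s • b') * ι K x := by
    have hswap : ι K x * ι K b' = -(ι K b' * ι K x) :=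
      eq_neg_of_add_eq_zero_left (ι_add_mul_swap x b')
    simp only [map_add, map_smul, map_sub, add_mul, mul_add, smul_mul_assoc, mul_smul_comm,
      ι_sq_zero, smul_zero, add_zero, sub_mul, hswap]
    module
  rw [expand]
  apply Submodule.add_mem
  · exact Submodule.mem_sup_left (mul_mem_wedge2 ha' hb')
  · exact Submodule.mem_sup_right ⟨t • a' - s • b',
      Submodule.sub_mem _ (Submodule.smul_mem _ _ ha') (Submodule.smul_mem _ _ hb'), rfl⟩

end Aux3
section Aux4

open Submodule ExteriorAlgebra Module

variable {K : Type u} [Field K] {W : Type v} [AddCommGroup W] [Module K W]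

lemma mem_wedge2_hyperplane {X : Submodule K W} {x : W} (hx : x ∉ X)
    {m : ExteriorAlgebra K W} (hm : m ∈ wedge2 K (X ⊔ Submodule.span K {x}))
    (h : ∀ φ : W →ₗ[K] K, (∀ v ∈ X, φ v = 0) → ctr φ m = 0) : m ∈ wedge2 K X := by
  have hmem := wedge2_sup_span_le X x hm
  rw [Submodule.mem_sup] at hmem
  obtain ⟨y, hy, z, hz, rfl⟩ := hmem
  obtain ⟨v, hv, rfl⟩ := hz
  obtain ⟨φ, hφ, hφx⟩ := exists_dual_annihilator hx
  have h0 := h φ hφ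
  rw [map_add, ctr_eq_zero_of_wedge2 φ hφ hy, zero_add] at h0
  have hc : ctr φ (((LinearMap.mulRight K (ι K x)).comp (ι K)) v) = -(ι K v) := by
    show ctr φ (ι K v * ι K x) = _
    rw [ctr_ι_mul_ι, hφ v hv, hφx]
    simp
  rw [hc, neg_eq_zero, ι_eq_zero_iff] at h0
  have : ((LinearMap.mulRight K (ι K x)).comp (ι K)) v = 0 := by
    rw [h0]; simp
  rw [this, add_zero]
  exact hy

lemma mem_wedge2_of_ctr_eq_zero_aux (A'' : Submodule K W) :
    ∀ (n : ℕ) (A : Submodule K W) [FiniteDimensional K ↥A], Module.finrank K ↥A ≤ n →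
    A'' ≤ A → ∀ {m : ExteriorAlgebra K W}, m ∈ wedge2 K A →
    (∀ φ : W →ₗ[K] K, (∀ v ∈ A'', φ v = 0) → ctr φ m = 0) → m ∈ wedge2 K A'' := by
  intro n
  induction n with
  | zero =>
    intro A _ hfr hle m hm h
    have : A = ⊥ := Submodule.finrank_eq_zero.1 (Nat.le_zero.1 hfr)
    exact wedge2_mono (this ▸ bot_le) hm
  | succ n IH =>
    intro A _ hfr hle m hm h
    by_cases hAA : A ≤ A''
    · exact wedge2_mono hAA hm
    · obtain ⟨x, hxA, hxA''⟩ := SetLike.not_le_iff_exists.1 hAA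
      obtain ⟨φ₀, hφ₀, hφ₀x⟩ := exists_dual_annihilator hxA''
      set A₁ : Submodule K W := A ⊓ LinearMap.ker φ₀ with hA₁def
      have hA''A₁ : A'' ≤ A₁ := le_inf hle (fun v hv => hφ₀ v hv)
      have hxA₁ : x ∉ A₁ := by
        intro hx
        have : φ₀ x = 0 := hx.2
        rw [hφ₀x] at this
        exact one_ne_zero this
      have hA₁A : A₁ ≤ A := inf_le_left
      have hsup : A ≤ A₁ ⊔ Submodule.span K {x} := by
        intro a ha
        have hEq : a = (a - φ₀ a • x) + φ₀ a • x := by module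
        rw [hEq]
        refine Submodule.add_mem _ (Submodule.mem_sup_left ⟨Submodule.sub_mem _ ha
          (Submodule.smul_mem _ _ hxA), ?_⟩)
          (Submodule.mem_sup_right (Submodule.smul_mem _ _ (Submodule.mem_span_singleton_self x)))
        simp [LinearMap.mem_ker, hφ₀x]
      haveI : FiniteDimensional K ↥A₁ := Submodule.finiteDimensional_of_le hA₁A
      have hm₁ : m ∈ wedge2 K A₁ := by
        apply mem_wedge2_hyperplane hxA₁ (wedge2_mono hsup hm)
        intro φ hφ
        exact h φ (fun v hv => hφ v (hA''A₁ hv))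
      have hlt : Module.finrank K ↥A₁ < Module.finrank K ↥A :=
        Submodule.finrank_lt_finrank_of_lt (lt_of_le_of_ne hA₁A (fun hEq => hxA₁ (hEq ▸ hxA)))
      exact IH A₁ (by omega) hA''A₁ hm₁ h

lemma mem_wedge2_of_ctr_eq_zero {A'' A : Submodule K W} [FiniteDimensional K ↥A]
    (hle : A'' ≤ A) {m : ExteriorAlgebra K W} (hm : m ∈ wedge2 K A)
    (h : ∀ φ : W →ₗ[K] K, (∀ v ∈ A'', φ v = 0) → ctr φ m = 0) : m ∈ wedge2 K A'' :=
  mem_wedge2_of_ctr_eq_zero_aux A'' (Module.finrank K ↥A) A le_rfl hle hm h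

end Aux4
section Aux5

open Submodule ExteriorAlgebra Module

variable {K : Type u} [Field K] {W : Type v} [AddCommGroup W] [Module K W]
variable {f : W →ₗ[K] W} {F : ExteriorAlgebra K W →ₗ[K] ExteriorAlgebra K W}

lemma F_mem_wedge2
    (hF : ∀ x y : W, F (ι K x * ι K y) = ι K (f x) * ι K y + ι K x * ι K (f y))
    {X : Submodule K W} {m : ExteriorAlgebra K W} (hm : m ∈ wedge2 K X) :
    F m ∈ wedge2 K (X ⊔ X.map f) := by
  have : wedge2 K X ≤ Submodule.comap F (wedge2 K (X ⊔ X.map f)) := by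
    apply wedge2_le
    intro a ha b hb
    simp only [Submodule.mem_comap, hF a b]
    exact Submodule.add_mem _
      (mul_mem_wedge2 (Submodule.mem_sup_right ⟨a, ha, rfl⟩) (Submodule.mem_sup_left hb))
      (mul_mem_wedge2 (Submodule.mem_sup_left ha) (Submodule.mem_sup_right ⟨b, hb, rfl⟩))
  exact this hm

lemma ctr_F_eq_ctr
    (hF : ∀ x y : W, F (ι K x * ι K y) = ι K (f x) * ι K y + ι K x * ι K (f y))
    {A : Submodule K W} (φ ψ : W →ₗ[K] K)
    (hψA : ∀ a ∈ A, ψ a = 0) (hψf : ∀ a ∈ A, ψ (f a) = φ a)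
    {m : ExteriorAlgebra K W} (hm : m ∈ wedge2 K A) :
    ctr ψ (F m) = ctr φ m := by
  have : wedge2 K A ≤ LinearMap.ker ((ctr ψ).comp F - ctr φ) := by
    apply wedge2_le
    intro a ha b hb
    simp only [LinearMap.mem_ker, LinearMap.sub_apply, LinearMap.comp_apply, hF a b]
    rw [map_add, ctr_ι_mul_ι, ctr_ι_mul_ι, ctr_ι_mul_ι,
      hψA a ha, hψA b hb, hψf a ha, hψf b hb]
    simp
  simpa [LinearMap.mem_ker, sub_eq_zero] using this hm

end Aux5
section Aux6

open Submodule ExteriorAlgebra Module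

variable {K : Type u} [Field K] {W : Type v} [AddCommGroup W] [Module K W]
variable {f : W →ₗ[K] W} {F : ExteriorAlgebra K W →ₗ[K] ExteriorAlgebra K W}

lemma key_freeness {A B A'' : Submodule K W} [FiniteDimensional K ↥A]
    (hgen : ∀ a ∈ A, f a ∈ A ⊔ Submodule.map f B → a ∈ B)
    (hF : ∀ x y : W, F (ι K x * ι K y) = ι K (f x) * ι K y + ι K x * ι K (f y))
    (hBA'' : B ≤ A'') (hA''A : A'' ≤ A)
    {m : ExteriorAlgebra K W} (hm : m ∈ wedge2 K A)
    (hFm : F m ∈ wedge2 K (A ⊔ A''.map f)) :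
    m ∈ wedge2 K A'' := by
  apply mem_wedge2_of_ctr_eq_zero hA''A hm
  intro φ hφ
  set S'' : Submodule K W := A ⊔ A''.map f with hS''
  set hbar : ↥A →ₗ[K] W ⧸ S'' := (S''.mkQ.comp f).comp A.subtype with hhbar
  have hker : LinearMap.ker hbar ≤ LinearMap.ker (φ.comp A.subtype) := by
    rintro ⟨a, ha⟩ hk
    have hfa : f a ∈ S'' := by
      simpa [hhbar, Submodule.Quotient.mk_eq_zero] using hk
    rw [hS'', Submodule.mem_sup] at hfa
    obtain ⟨x, hx, y, hy, hEq⟩ := hfa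
    obtain ⟨a'', ha'', rfl⟩ := hy
    have hsub : a - a'' ∈ B := by
      apply hgen _ (Submodule.sub_mem _ ha (hA''A ha''))
      have : f (a - a'') = x := by rw [map_sub]; rw [← hEq]; abel
      rw [this]
      exact Submodule.mem_sup_left hx
    have haA'' : a ∈ A'' := by
      have h1 : a - a'' ∈ A'' := hBA'' hsub
      have h2 : a = (a - a'') + a'' := by abel
      rw [h2]
      exact Submodule.add_mem _ h1 ha''
    simpa [LinearMap.mem_ker] using hφ a haA''
  set φ' : (↥A ⧸ LinearMap.ker hbar) →ₗ[K] K :=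
    (LinearMap.ker hbar).liftQ (φ.comp A.subtype) hker with hφ'
  set eE := hbar.quotKerEquivRange with heE
  set χ₀ : ↥(LinearMap.range hbar) →ₗ[K] K := φ'.comp eE.symm.toLinearMap with hχ₀
  obtain ⟨χ, hχ⟩ := exists_extend_dual (LinearMap.range hbar) χ₀
  set ψ : W →ₗ[K] K := χ.comp S''.mkQ with hψ
  have hψ1 : ∀ s ∈ S'', ψ s = 0 := by
    intro s hs
    simp [hψ, (Submodule.Quotient.mk_eq_zero _).2 hs]
  have hψ2 : ∀ a ∈ A, ψ (f a) = φ a := by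
    intro a ha
    have hmem : S''.mkQ (f a) ∈ LinearMap.range hbar := ⟨⟨a, ha⟩, rfl⟩
    have h1 : ψ (f a) = χ₀ ⟨S''.mkQ (f a), hmem⟩ := hχ ⟨S''.mkQ (f a), hmem⟩
    rw [h1, hχ₀]
    have h2 : eE ((LinearMap.ker hbar).mkQ ⟨a, ha⟩) = ⟨S''.mkQ (f a), hmem⟩ := by
      apply Subtype.ext
      exact hbar.quotKerEquivRange_apply_mk ⟨a, ha⟩
    have h3 : eE.symm ⟨S''.mkQ (f a), hmem⟩ = (LinearMap.ker hbar).mkQ ⟨a, ha⟩ := by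
      rw [← h2, LinearEquiv.symm_apply_apply]
    simp only [LinearMap.comp_apply, LinearEquiv.coe_coe, h3]
    rw [hφ']
    simp [Submodule.liftQ_apply]
  calc ctr φ m = ctr ψ (F m) :=
        (ctr_F_eq_ctr hF φ ψ (fun a ha => hψ1 a (Submodule.mem_sup_left ha)) hψ2 hm).symm
    _ = 0 := ctr_eq_zero_of_wedge2 ψ hψ1 hFm

end Aux6
section Aux7

open Submodule Module

variable {K : Type u} [Field K] {V' : Type*} [AddCommGroup V'] [Module K V']

lemma fdim_eq_finrank_map_mkQ (C B : Submodule K V') :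
    fdim K C B = Module.finrank K ↥(B.map C.mkQ) := by
  have h1 : LinearMap.ker (C.mkQ.comp B.subtype) = Submodule.comap B.subtype C := by
    ext x
    simp [LinearMap.mem_ker, Submodule.Quotient.mk_eq_zero]
  have h2 : LinearMap.range (C.mkQ.comp B.subtype) = B.map C.mkQ := by
    rw [LinearMap.range_comp, Submodule.range_subtype]
  exact LinearEquiv.finrank_eq ((Submodule.quotEquivOfEq _ _ h1.symm).trans
    ((C.mkQ.comp B.subtype).quotKerEquivRange.trans (LinearEquiv.ofEq _ _ h2)))

lemma fdim_eq_of_family {C B : Submodule K V'} {t : ℕ} {e : Fin t → V'}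
    (h1 : ∀ i, e i ∈ B)
    (h2 : ∀ c : Fin t → K, (∑ i, c i • e i) ∈ C → ∀ i, c i = 0)
    (h3 : B ≤ C ⊔ Submodule.span K (Set.range e)) :
    fdim K C B = t := by
  rw [fdim_eq_finrank_map_mkQ]
  have hmap : B.map C.mkQ = Submodule.span K (Set.range (fun i => C.mkQ (e i))) := by
    apply le_antisymm
    · rw [Submodule.map_le_iff_le_comap]
      intro x hx
      have hx' := h3 hx
      rw [Submodule.mem_sup] at hx'
      obtain ⟨c, hc, s, hs, rfl⟩ := hx'
      have hs' : C.mkQ s ∈ Submodule.span K (Set.range (fun i => C.mkQ (e i))) := by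
        have := Submodule.mem_map_of_mem (f := C.mkQ) hs
        rw [Submodule.map_span, ← Set.range_comp] at this
        exact this
      simp only [Submodule.mem_comap, map_add]
      rw [show C.mkQ c = 0 from (Submodule.Quotient.mk_eq_zero C).2 hc, zero_add]
      exact hs'
    · rw [Submodule.span_le]
      rintro _ ⟨i, rfl⟩
      exact Submodule.mem_map_of_mem (h1 i)
  rw [hmap]
  have hli : LinearIndependent K (fun i => C.mkQ (e i)) := by
    rw [Fintype.linearIndependent_iff]
    intro c hc
    apply h2 c
    rw [← Submodule.Quotient.mk_eq_zero C]
    rw [show (Submodule.Quotient.mk (∑ i, c i • e i) : V' ⧸ C) = C.mkQ (∑ i, c i • e i) from rfl]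
    rw [map_sum]
    simpa [map_smul] using hc
  rw [finrank_span_eq_card hli]
  simp

lemma exists_basis_family (C B : Submodule K V') [FiniteDimensional K ↥B] :
    ∃ e : Fin (fdim K C B) → V', (∀ i, e i ∈ B) ∧
      (∀ c : Fin (fdim K C B) → K, (∑ i, c i • e i) ∈ C → ∀ i, c i = 0) ∧
      B ≤ C ⊔ Submodule.span K (Set.range e) := by
  haveI : FiniteDimensional K ↥(B.map C.mkQ) := Module.Finite.map B C.mkQ
  have ht : Module.finrank K ↥(B.map C.mkQ) = fdim K C B := (fdim_eq_finrank_map_mkQ C B).symm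
  set b := (Module.finBasis K ↥(B.map C.mkQ)).reindex (finCongr ht) with hb
  have hbmem : ∀ i, ((b i : V' ⧸ C)) ∈ B.map C.mkQ := fun i => (b i).2
  have hchoice : ∀ i, ∃ x, x ∈ B ∧ C.mkQ x = (b i : V' ⧸ C) := by
    intro i
    obtain ⟨x, hx, hx2⟩ := hbmem i
    exact ⟨x, hx, hx2⟩
  choose e he1 he2 using hchoice
  refine ⟨e, he1, ?_, ?_⟩
  · intro c hc
    have hli : LinearIndependent K (fun i => ((b i : V' ⧸ C))) :=
      b.linearIndependent.map' (B.map C.mkQ).subtype (Submodule.ker_subtype _)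
    rw [Fintype.linearIndependent_iff] at hli
    apply hli c
    have : C.mkQ (∑ i, c i • e i) = 0 := (Submodule.Quotient.mk_eq_zero C).2 hc
    rw [map_sum] at this
    simpa [map_smul, he2] using this
  · intro x hx
    have hsp : Submodule.span K (Set.range (fun i => ((b i : V' ⧸ C)))) = B.map C.mkQ := by
      have := b.span_eq
      apply_fun Submodule.map (B.map C.mkQ).subtype at this
      rw [Submodule.map_span, ← Set.range_comp] at this
      simpa [Submodule.map_top, Submodule.range_subtype, Function.comp_def] using this
    have hx2 : C.mkQ x ∈ Submodule.span K (Set.range (fun i => C.mkQ (e i))) := by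
      have : C.mkQ x ∈ B.map C.mkQ := Submodule.mem_map_of_mem hx
      rw [← hsp] at this
      simpa [he2] using this
    rw [show (Set.range fun i => C.mkQ (e i)) = C.mkQ '' Set.range e from
        Set.range_comp (C.mkQ) e, ← Submodule.map_span] at hx2
    obtain ⟨y, hy, hxy⟩ := hx2
    have : x - y ∈ C := by
      rw [← Submodule.Quotient.mk_eq_zero C]
      have : C.mkQ (x - y) = 0 := by rw [map_sub, hxy, sub_self]
      exact this
    have hEq : x = (x - y) + y := by abel
    rw [hEq]
    exact Submodule.add_mem _ (Submodule.mem_sup_left this) (Submodule.mem_sup_right hy)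

end Aux7
theorem statement2 {K : Type u} [Field K] {W : Type v} [AddCommGroup W] [Module K W]
    (V A B : Submodule K W) [FiniteDimensional K ↥A]
    (hBA : B ≤ A) (hAV : A ≤ V)
    (f : W →ₗ[K] W) (hfB : ∀ b ∈ B, f b ∈ V)
    (hgen : ∀ a ∈ A, f a ∈ A ⊔ Submodule.map f B → a ∈ B)
    (F : ExteriorAlgebra K W →ₗ[K] ExteriorAlgebra K W)
    (hF : ∀ x y : W,
      F (ExteriorAlgebra.ι K x * ExteriorAlgebra.ι K y) =
        ExteriorAlgebra.ι K (f x) * ExteriorAlgebra.ι K y +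
          ExteriorAlgebra.ι K x * ExteriorAlgebra.ι K (f y))
    (N : Submodule K (ExteriorAlgebra K W)) (hNV : N ≤ wedge2 K V)
    (hNB : Submodule.map F (N ⊓ wedge2 K B) ≤ N ⊓ wedge2 K (B ⊔ Submodule.map f B))
    (A' : Submodule K W) (hBA' : B ≤ A') (hA'A : A' ≤ A) :
    let S : Submodule K W := A ⊔ Submodule.map f B
    let S' : Submodule K W := A ⊔ Submodule.map f A'
    let N' : Submodule K (ExteriorAlgebra K W) :=
      (N ⊓ wedge2 K S) ⊔ Submodule.map F (N ⊓ wedge2 K A)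
    (N' ⊓ wedge2 K S' = (N ⊓ wedge2 K S) ⊔ Submodule.map F (N ⊓ wedge2 K A')) ∧
    (∀ (t : ℕ) (e : Fin t → ExteriorAlgebra K W),
      (∀ i, e i ∈ N ⊓ wedge2 K A') →
      (∀ c : Fin t → K, (∑ i, c i • e i) ∈ N ⊓ wedge2 K B → ∀ i, c i = 0) →
      (N ⊓ wedge2 K A' ≤ (N ⊓ wedge2 K B) ⊔ Submodule.span K (Set.range e)) →
      ((∀ i, F (e i) ∈ N' ⊓ wedge2 K S') ∧
        (∀ c : Fin t → K, (∑ i, c i • F (e i)) ∈ N ⊓ wedge2 K S → ∀ i, c i = 0) ∧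
        N' ⊓ wedge2 K S' ≤
          (N ⊓ wedge2 K S) ⊔ Submodule.span K (Set.range fun i => F (e i)))) ∧
    (fdim K (N ⊓ wedge2 K S) (N' ⊓ wedge2 K S') = fdim K (N ⊓ wedge2 K B) (N ⊓ wedge2 K A') ∧
      pdim K N' S S' = pdim K N B A') := by
  intro S S' N'
  have hSS' : S ≤ S' := sup_le_sup_left (Submodule.map_mono hBA') A
  have hA'S' : A' ⊔ Submodule.map f A' ≤ S' := sup_le (le_trans hA'A le_sup_left) le_sup_right
  have hBS : B ⊔ Submodule.map f B ≤ S := sup_le (le_trans hBA le_sup_left) le_sup_right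
  -- F of wedge2 A' lands in wedge2 S'
  have hFwA' : ∀ {m : ExteriorAlgebra K W}, m ∈ wedge2 K A' → F m ∈ wedge2 K S' := by
    intro m hm
    exact wedge2_mono hA'S' (F_mem_wedge2 hF hm)
  -- Part 1
  have part1 : N' ⊓ wedge2 K S' = (N ⊓ wedge2 K S) ⊔ Submodule.map F (N ⊓ wedge2 K A') := by
    apply le_antisymm
    · rintro n ⟨hn1, hn2⟩
      obtain ⟨s, hs, z, hz, rfl⟩ := Submodule.mem_sup.1 hn1
      obtain ⟨m, hm, rfl⟩ := hz
      have hFm : F m ∈ wedge2 K S' := by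
        have : F m = (s + F m) - s := by abel
        rw [this]
        exact Submodule.sub_mem _ hn2 (wedge2_mono hSS' hs.2)
      have hmA' : m ∈ wedge2 K A' := key_freeness hgen hF hBA' hA'A hm.2 hFm
      exact Submodule.add_mem _ (Submodule.mem_sup_left hs)
        (Submodule.mem_sup_right ⟨m, ⟨hm.1, hmA'⟩, rfl⟩)
    · apply sup_le
      · exact le_inf le_sup_left (le_trans inf_le_right (wedge2_mono hSS'))
      · apply le_inf
        · exact le_trans (Submodule.map_mono
            (inf_le_inf_left N (wedge2_mono hA'A))) le_sup_right
        · rintro _ ⟨m, hm, rfl⟩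
          exact hFwA' hm.2
  -- N' ∩ wedge2 S = N ∩ wedge2 S
  have partNS : N' ⊓ wedge2 K S = N ⊓ wedge2 K S := by
    apply le_antisymm
    · rintro n ⟨hn1, hn2⟩
      obtain ⟨s, hs, z, hz, rfl⟩ := Submodule.mem_sup.1 hn1
      obtain ⟨m, hm, rfl⟩ := hz
      have hFm : F m ∈ wedge2 K S := by
        have : F m = (s + F m) - s := by abel
        rw [this]
        exact Submodule.sub_mem _ hn2 hs.2
      have hmB : m ∈ wedge2 K B := key_freeness hgen hF le_rfl hBA hm.2 hFm
      have hFmS : F m ∈ N ⊓ wedge2 K S := by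
        have := hNB ⟨m, ⟨hm.1, hmB⟩, rfl⟩
        exact ⟨this.1, wedge2_mono hBS this.2⟩
      exact Submodule.add_mem _ ⟨hs.1, hs.2⟩ hFmS
    · exact le_inf (le_trans (le_inf inf_le_left inf_le_right) le_sup_left) inf_le_right
  -- Part 2
  have part2 : ∀ (t : ℕ) (e : Fin t → ExteriorAlgebra K W),
      (∀ i, e i ∈ N ⊓ wedge2 K A') →
      (∀ c : Fin t → K, (∑ i, c i • e i) ∈ N ⊓ wedge2 K B → ∀ i, c i = 0) →
      (N ⊓ wedge2 K A' ≤ (N ⊓ wedge2 K B) ⊔ Submodule.span K (Set.range e)) →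
      ((∀ i, F (e i) ∈ N' ⊓ wedge2 K S') ∧
        (∀ c : Fin t → K, (∑ i, c i • F (e i)) ∈ N ⊓ wedge2 K S → ∀ i, c i = 0) ∧
        N' ⊓ wedge2 K S' ≤
          (N ⊓ wedge2 K S) ⊔ Submodule.span K (Set.range fun i => F (e i))) := by
    intro t e he1 he2 he3
    refine ⟨?_, ?_, ?_⟩
    · intro i
      refine ⟨Submodule.mem_sup_right ⟨e i, ⟨(he1 i).1, wedge2_mono hA'A (he1 i).2⟩, rfl⟩, ?_⟩
      exact hFwA' (he1 i).2
    · intro c hc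
      have hsum : (∑ i, c i • F (e i)) = F (∑ i, c i • e i) := by
        rw [map_sum]
        simp only [map_smul]
      rw [hsum] at hc
      have hmN : (∑ i, c i • e i) ∈ N := Submodule.sum_mem _ (fun i _ =>
        Submodule.smul_mem _ _ (he1 i).1)
      have hmw : (∑ i, c i • e i) ∈ wedge2 K A' := Submodule.sum_mem _ (fun i _ =>
        Submodule.smul_mem _ _ (he1 i).2)
      have hmB : (∑ i, c i • e i) ∈ wedge2 K B :=
        key_freeness hgen hF le_rfl hBA (wedge2_mono hA'A hmw) hc.2
      exact he2 c ⟨hmN, hmB⟩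
    · intro n hn
      rw [part1, Submodule.mem_sup] at hn
      obtain ⟨s, hs, z, hz, rfl⟩ := hn
      obtain ⟨m, hm, rfl⟩ := hz
      have := he3 hm
      rw [Submodule.mem_sup] at this
      obtain ⟨nB, hnB, y, hy, rfl⟩ := this
      rw [map_add]
      have hFnB : F nB ∈ N ⊓ wedge2 K S := by
        have := hNB ⟨nB, hnB, rfl⟩
        exact ⟨this.1, wedge2_mono hBS this.2⟩
      have hFy : F y ∈ Submodule.span K (Set.range fun i => F (e i)) := by
        have : F y ∈ Submodule.map F (Submodule.span K (Set.range e)) :=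
          Submodule.mem_map_of_mem hy
        rw [Submodule.map_span] at this
        rwa [show F '' Set.range e = Set.range fun i => F (e i) from
          (Set.range_comp F e).symm] at this
      have : s + (F nB + F y) = (s + F nB) + F y := by abel
      rw [this]
      exact Submodule.add_mem _ (Submodule.mem_sup_left (Submodule.add_mem _ hs hFnB))
        (Submodule.mem_sup_right hFy)
  refine ⟨part1, part2, ?_, ?_⟩
  -- Part 3a
  · haveI : FiniteDimensional K ↥A' := Submodule.finiteDimensional_of_le hA'A
    haveI : FiniteDimensional K ↥(wedge2 K A') := wedge2_finiteDimensional A'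
    haveI : FiniteDimensional K ↥(N ⊓ wedge2 K A') :=
      Submodule.finiteDimensional_of_le inf_le_right
    obtain ⟨e, he1, he2, he3⟩ := exists_basis_family (N ⊓ wedge2 K B) (N ⊓ wedge2 K A')
    obtain ⟨p1, p2, p3⟩ := part2 _ e he1 he2 he3
    exact fdim_eq_of_family p1 p2 p3
  -- Part 3b
  · haveI : FiniteDimensional K ↥A' := Submodule.finiteDimensional_of_le hA'A
    haveI : FiniteDimensional K ↥(wedge2 K A') := wedge2_finiteDimensional A'
    haveI : FiniteDimensional K ↥(N ⊓ wedge2 K A') :=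
      Submodule.finiteDimensional_of_le inf_le_right
    obtain ⟨e, he1, he2, he3⟩ := exists_basis_family (N ⊓ wedge2 K B) (N ⊓ wedge2 K A')
    obtain ⟨p1, p2, p3⟩ := part2 _ e he1 he2 he3
    have h3a : fdim K (N ⊓ wedge2 K S) (N' ⊓ wedge2 K S') =
        fdim K (N ⊓ wedge2 K B) (N ⊓ wedge2 K A') := fdim_eq_of_family p1 p2 p3
    -- dim S'/S = dim A'/B
    obtain ⟨a, ha1, ha2, ha3⟩ := exists_basis_family B A'
    have hdim : fdim K S S' = fdim K B A' := by
      apply fdim_eq_of_family (e := fun i => f (a i))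
      · intro i
        exact Submodule.mem_sup_right ⟨a i, ha1 i, rfl⟩
      · intro c hc
        have hsum : (∑ i, c i • f (a i)) = f (∑ i, c i • a i) := by
          rw [map_sum]
          simp only [map_smul]
        rw [hsum] at hc
        have hmem : (∑ i, c i • a i) ∈ A' := Submodule.sum_mem _ (fun i _ =>
          Submodule.smul_mem _ _ (ha1 i))
        exact ha2 c (hgen _ (hA'A hmem) hc)
      · apply sup_le
        · exact le_trans le_sup_left le_sup_left
        · rintro _ ⟨x, hx, rfl⟩
          have := ha3 hx
          rw [Submodule.mem_sup] at this
          obtain ⟨b, hb, y, hy, rfl⟩ := this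
          rw [map_add]
          have h1 : f b ∈ S := Submodule.mem_sup_right ⟨b, hb, rfl⟩
          have h2 : f y ∈ Submodule.span K (Set.range fun i => f (a i)) := by
            have : f y ∈ Submodule.map f (Submodule.span K (Set.range a)) :=
              Submodule.mem_map_of_mem hy
            rw [Submodule.map_span] at this
            rwa [show f '' Set.range a = Set.range fun i => f (a i) from
              (Set.range_comp f a).symm] at this
          exact Submodule.add_mem _ (Submodule.mem_sup_left h1) (Submodule.mem_sup_right h2)
    show (fdim K S S' : ℤ) - (fdim K (N' ⊓ wedge2 K S) (N' ⊓ wedge2 K S') : ℤ) =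
      (fdim K B A' : ℤ) - (fdim K (N ⊓ wedge2 K B) (N ⊓ wedge2 K A') : ℤ)
    rw [partNS, hdim, h3a]
end
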